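/- Let 𝔛 be a Bourgain–Delbaen space with constant C = sup_q ‖i_q‖, and define c_γ* = 0 for γ ∈ Δ_0, c_γ* = e_γ* ∘ i_q ∘ r_q for γ ∈ Δ_{q+1}, and d_γ* = e_γ* − c_γ*. Then for every q ∈ ℕ∪{0}, span{d_γ* : γ ∈ Γ_q} = span{e_γ* : γ ∈ Γ_q}. In particular, the closed linear span of (d_γ*)_{γ∈Γ} in 𝔛* is C-isomorphic to ℓ1. -/

import Mathlib

open scoped ENNReal
open Filter Topology

set_option maxHeartbeats 1000000
set_option synthInstance.maxHeartbeats 400000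

noncomputable section

/-- `ℓ∞(Γ)`. -/
abbrev Linf (Γ : Type*) : Type _ := lp (fun _ : Γ => ℝ) ∞

namespace BD

variable {Γ : Type*}

/-- The evaluation map on `ℓ∞(Γ)`, as a linear map. -/
def evalLM (γ : Γ) : Linf Γ →ₗ[ℝ] ℝ where
  toFun f := f γ
  map_add' f g := by simp
  map_smul' c f := by simp

/-- The evaluation functional `e_γ^*` on `ℓ∞(Γ)`. -/
def evalL (γ : Γ) : Linf Γ →L[ℝ] ℝ :=
  LinearMap.mkContinuous (evalLM γ) 1 fun f => by
    rw [one_mul]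
    exact lp.norm_apply_le_norm ENNReal.top_ne_zero f γ

/-- The restriction map `ℓ∞(Γ) → ℓ∞(A)`, as a linear map. -/
def restrLM (A : Finset Γ) : Linf Γ →ₗ[ℝ] (↥A → ℝ) where
  toFun f γ := f γ.1
  map_add' f g := by ext γ; simp
  map_smul' c f := by ext γ; simp

/-- The restriction operator `r_A : ℓ∞(Γ) → ℓ∞(A)` for a finite set `A ⊆ Γ`. -/
def restrCLM (A : Finset Γ) : Linf Γ →L[ℝ] (↥A → ℝ) :=
  LinearMap.mkContinuous (restrLM A) 1 fun f => by
    rw [one_mul]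
    refine (pi_norm_le_iff_of_nonneg (norm_nonneg f)).2 fun γ => ?_
    exact lp.norm_apply_le_norm ENNReal.top_ne_zero f γ.1

/-- The data defining a Bourgain-Delbaen space: a strictly increasing sequence of
nonempty finite subsets of `Γ` covering `Γ`, together with a uniformly bounded compatible
sequence of extension operators. -/
structure System (Γ : Type*) where
  Γs : ℕ → Finset Γ
  strict : StrictMono Γs
  nonempty : ∀ q, (Γs q).Nonempty
  covers : ∀ γ : Γ, ∃ q, γ ∈ Γs q
  i : ∀ q, (↥(Γs q) → ℝ) →L[ℝ] Linf Γ
  extension : ∀ q (x : ↥(Γs q) → ℝ) (γ : ↥(Γs q)), i q x γ.1 = x γ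
  compat : ∀ p q, p < q → ∀ x : ↥(Γs p) → ℝ, i p x = i q (restrCLM (Γs q) (i p x))
  bdd : BddAbove (Set.range fun q => ‖i q‖)

/-- `C = sup_q ‖i_q‖`. -/
def System.C (S : System Γ) : ℝ := ⨆ q, ‖S.i q‖

/-- `Δ_0 = Γ_0`, `Δ_q = Γ_q \ Γ_{q-1}`. -/
def System.Δ (S : System Γ) : ℕ → Finset Γ := fun q =>
  letI := Classical.decEq Γ
  match q with
  | 0 => S.Γs 0
  | q + 1 => S.Γs (q + 1) \ S.Γs q

/-- The unique `q` with `γ ∈ Δ_q`. -/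
def System.rk (S : System Γ) (γ : Γ) : ℕ :=
  letI := Classical.decEq Γ
  Nat.find (S.covers γ)

/-- The vector `d_γ = i_q (e_γ)` for `γ ∈ Δ_q`. -/
def System.dvec (S : System Γ) (γ : Γ) : Linf Γ :=
  letI := Classical.decEq Γ
  S.i (S.rk γ) fun δ => if (δ : Γ) = γ then 1 else 0

/-- `M_q = span {d_γ : γ ∈ Δ_q}`. -/
def System.M (S : System Γ) (q : ℕ) : Submodule ℝ (Linf Γ) :=
  Submodule.span ℝ (S.dvec '' (S.Δ q : Set Γ))

/-- The Bourgain-Delbaen space: the closed linear span of the `d_γ`'s in `ℓ∞(Γ)`. -/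
def System.space (S : System Γ) : Submodule ℝ (Linf Γ) :=
  (Submodule.span ℝ (Set.range S.dvec)).topologicalClosure


section ShortcutInstances

noncomputable instance (priority := 10000) instLinfNACG (Γ : Type*) :
    NormedAddCommGroup (Linf Γ) := inferInstance

noncomputable instance (priority := 10000) instLinfNS (Γ : Type*) :
    NormedSpace ℝ (Linf Γ) := inferInstance

noncomputable instance (priority := 10000) instSpaceNACG (S : System Γ) :
    NormedAddCommGroup ↥S.space := inferInstance

noncomputable instance (priority := 10000) instSpaceNS (S : System Γ) :
    NormedSpace ℝ ↥S.space := inferInstance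

noncomputable instance (priority := 10000) instDualNACG (S : System Γ) :
    NormedAddCommGroup (↥S.space →L[ℝ] ℝ) := inferInstance

noncomputable instance (priority := 10000) instDualNS (S : System Γ) :
    NormedSpace ℝ (↥S.space →L[ℝ] ℝ) := inferInstance

end ShortcutInstances

lemma dvec_mem (S : System Γ) (γ : Γ) : S.dvec γ ∈ S.space :=
  Submodule.le_topologicalClosure _ (Submodule.subset_span ⟨γ, rfl⟩)

end BD

namespace BD

variable {Γ : Type*}

/-- The evaluation functional `e_γ^*` restricted to the Bourgain–Delbaen space. -/
def evalS (S : System Γ) (γ : Γ) : ↥S.space →L[ℝ] ℝ :=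
  (evalL γ).comp S.space.subtypeL

/-- The functional `e_γ^* ∘ i_p ∘ r_p` on the Bourgain–Delbaen space. -/
def cAt (S : System Γ) (p : ℕ) (γ : Γ) : ↥S.space →L[ℝ] ℝ :=
  ((evalL γ).comp ((S.i p).comp (restrCLM (S.Γs p)))).comp S.space.subtypeL

/-- `c_γ^* = 0` if `γ ∈ Δ_0`, and `c_γ^* = e_γ^* ∘ i_q ∘ r_q` if `γ ∈ Δ_{q+1}`. -/
def cstar (S : System Γ) (γ : Γ) : ↥S.space →L[ℝ] ℝ :=
  if S.rk γ = 0 then 0 else cAt S (S.rk γ - 1) γ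

/-- `d_γ^* = e_γ^* - c_γ^*`. -/
def dstar (S : System Γ) (γ : Γ) : ↥S.space →L[ℝ] ℝ :=
  evalS S γ - cstar S γ

end BD

namespace BD

variable {Γ : Type*}

noncomputable instance (priority := 10000) instDualSubNACG (S : System Γ)
    (p : Submodule ℝ (↥S.space →L[ℝ] ℝ)) : NormedAddCommGroup ↥p := inferInstance

noncomputable instance (priority := 10000) instDualSubNS (S : System Γ)
    (p : Submodule ℝ (↥S.space →L[ℝ] ℝ)) : NormedSpace ℝ ↥p := inferInstance

/-- The closed linear span of the biorthogonal functionals `(d_γ^*)_{γ∈Γ}` in the dual of the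
Bourgain–Delbaen space. -/
def dstarSpan (S : System Γ) : Submodule ℝ (↥S.space →L[ℝ] ℝ) :=
  (Submodule.span ℝ (Set.range (dstar S))).topologicalClosure

end BD

namespace BD

variable {Γ : Type*} (S : System Γ)

lemma System.Γs_mono : Monotone S.Γs := S.strict.monotone

lemma System.rk_le {γ : Γ} {q : ℕ} (h : γ ∈ S.Γs q) : S.rk γ ≤ q := by
  letI := Classical.decEq Γ
  exact Nat.find_le h

lemma System.mem_Γs_rk (γ : Γ) : γ ∈ S.Γs (S.rk γ) := by
  letI := Classical.decEq Γ
  exact Nat.find_spec (S.covers γ)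

lemma System.lt_rk {γ : Γ} {q : ℕ} (h : γ ∉ S.Γs q) : q < S.rk γ := by
  by_contra hc
  exact h (S.Γs_mono (not_lt.1 hc) (S.mem_Γs_rk γ))

/-- The indicator of `δ` as an element of `ℓ∞(Γs q)`. -/
def System.ind (q : ℕ) (δ : Γ) : ↥(S.Γs q) → ℝ :=
  letI := Classical.decEq Γ
  fun γ' => if (γ' : Γ) = δ then 1 else 0

lemma System.dvec_eq_ind {γ : Γ} {q : ℕ} (h : S.rk γ = q) :
    S.dvec γ = S.i q (S.ind q γ) := by
  subst h; rfl

lemma System.ind_apply_self {q : ℕ} {δ : Γ} (h : δ ∈ S.Γs q) : S.ind q δ ⟨δ, h⟩ = 1 := by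
  simp [System.ind]

lemma System.ind_apply_ne {q : ℕ} {δ : Γ} (γ : ↥(S.Γs q)) (h : (γ : Γ) ≠ δ) :
    S.ind q δ γ = 0 := by
  simp [System.ind, h]

/-- Decomposition of `i_q v` as a combination of the `i_q e_γ`. -/
lemma System.i_apply_eq_sum (q : ℕ) (v : ↥(S.Γs q) → ℝ) :
    S.i q v = ∑ γ : ↥(S.Γs q), v γ • S.i q (S.ind q γ) := by
  classical
  have hv : v = ∑ γ : ↥(S.Γs q), v γ • S.ind q (γ : Γ) := by
    funext γ'
    simp only [Finset.sum_apply, Pi.smul_apply, smul_eq_mul, System.ind]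
    rw [Finset.sum_eq_single γ']
    · simp
    · intro γ _ hne
      have h2 : ¬ ((γ' : Γ) = (γ : Γ)) := by
        exact fun h => hne (Subtype.ext h.symm)
      simp [h2]
    · intro h; exact absurd (Finset.mem_univ γ') h
  conv_lhs => rw [hv]
  rw [map_sum]
  simp

end BD
namespace BD

variable {Γ : Type*} (S : System Γ)

lemma System.i_ind_mem_span (q : ℕ) :
    ∀ δ : Γ, δ ∈ S.Γs q →
      S.i q (S.ind q δ) ∈ Submodule.span ℝ (S.dvec '' (S.Γs q : Set Γ)) := by
  classical
  suffices H : ∀ k : ℕ, ∀ δ : Γ, δ ∈ S.Γs q → q - S.rk δ ≤ k →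
      S.i q (S.ind q δ) ∈ Submodule.span ℝ (S.dvec '' (S.Γs q : Set Γ)) by
    intro δ hδ; exact H q δ hδ (Nat.sub_le _ _)
  intro k
  induction k with
  | zero =>
    intro δ hδ hk
    have hrk : S.rk δ = q := le_antisymm (S.rk_le hδ) (by omega)
    rw [← S.dvec_eq_ind hrk]
    exact Submodule.subset_span ⟨δ, hδ, rfl⟩
  | succ k IH =>
    intro δ hδ hk
    by_cases hq : S.rk δ = q
    · rw [← S.dvec_eq_ind hq]
      exact Submodule.subset_span ⟨δ, hδ, rfl⟩
    · set p := S.rk δ with hp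
      have hpq : p < q := lt_of_le_of_ne (S.rk_le hδ) hq
      set y : ↥(S.Γs q) → ℝ := restrCLM (S.Γs q) (S.i p (S.ind p δ)) with hy
      have hdvec : S.dvec δ = S.i q y := by
        rw [S.dvec_eq_ind hp.symm]
        exact S.compat p q hpq (S.ind p δ)
      have hsum : S.dvec δ = ∑ γ : ↥(S.Γs q), y γ • S.i q (S.ind q γ) := by
        rw [hdvec, S.i_apply_eq_sum]
      have hδq : (⟨δ, hδ⟩ : ↥(S.Γs q)) ∈ Finset.univ := Finset.mem_univ _
      rw [← Finset.sum_erase_add _ _ hδq] at hsum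
      have hyδ : y ⟨δ, hδ⟩ = 1 := by
        have hδp : δ ∈ S.Γs p := S.mem_Γs_rk δ
        have := S.extension p (S.ind p δ) ⟨δ, hδp⟩
        simp only [hy, restrCLM, restrLM, LinearMap.mkContinuous_apply,
          LinearMap.coe_mk, AddHom.coe_mk] at *
        rw [this, S.ind_apply_self hδp]
      rw [hyδ, one_smul] at hsum
      have hmem : S.i q (S.ind q δ) =
          S.dvec δ - ∑ γ ∈ Finset.univ.erase ⟨δ, hδ⟩, y γ • S.i q (S.ind q γ) := by
        rw [hsum]; abel
      rw [hmem]
      refine Submodule.sub_mem _ (Submodule.subset_span ⟨δ, hδ, rfl⟩) ?_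
      refine Submodule.sum_mem _ fun γ hγ => ?_
      by_cases hγp : (γ : Γ) ∈ S.Γs p
      · have hne : (γ : Γ) ≠ δ := by
          intro hcc
          exact (Finset.ne_of_mem_erase hγ) (Subtype.ext hcc)
        have : y γ = 0 := by
          have := S.extension p (S.ind p δ) ⟨γ, hγp⟩
          simp only [hy, restrCLM, restrLM, LinearMap.mkContinuous_apply,
            LinearMap.coe_mk, AddHom.coe_mk] at *
          rw [this]
          exact S.ind_apply_ne (⟨(γ : Γ), hγp⟩ : ↥(S.Γs p)) hne
        rw [this, zero_smul]
        exact Submodule.zero_mem _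
      · have hrkγ : p < S.rk (γ : Γ) := S.lt_rk hγp
        exact Submodule.smul_mem _ _ (IH γ γ.2 (by omega))

lemma System.i_mem_span (q : ℕ) (v : ↥(S.Γs q) → ℝ) :
    S.i q v ∈ Submodule.span ℝ (S.dvec '' (S.Γs q : Set Γ)) := by
  rw [S.i_apply_eq_sum]
  exact Submodule.sum_mem _ fun γ _ =>
    Submodule.smul_mem _ _ (S.i_ind_mem_span q γ γ.2)

lemma System.i_mem_space (q : ℕ) (v : ↥(S.Γs q) → ℝ) : S.i q v ∈ S.space := by
  refine Submodule.le_topologicalClosure _ ?_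
  refine Submodule.span_mono ?_ (S.i_mem_span q v)
  rintro _ ⟨γ, _, rfl⟩
  exact ⟨γ, rfl⟩

end BD
namespace BD

variable {Γ : Type*} (S : System Γ)

lemma cAt_eq (p : ℕ) (γ : Γ) :
    cAt S p γ = ∑ δ : ↥(S.Γs p), (S.i p (S.ind p δ) γ) • evalS S δ := by
  ext x
  simp only [cAt, evalS, ContinuousLinearMap.comp_apply, ContinuousLinearMap.sum_apply,
    ContinuousLinearMap.smul_apply, smul_eq_mul]
  have hv : (restrCLM (S.Γs p) (S.space.subtypeL x) : ↥(S.Γs p) → ℝ) =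
      fun δ : ↥(S.Γs p) => (x : Linf Γ) (δ : Γ) := rfl
  rw [S.i_apply_eq_sum p (restrCLM (S.Γs p) (S.space.subtypeL x)), map_sum]
  refine Finset.sum_congr rfl fun δ _ => ?_
  rw [hv]
  have : evalL γ ((x : Linf Γ) (δ : Γ) • S.i p (S.ind p δ)) =
      (x : Linf Γ) (δ : Γ) * evalL γ (S.i p (S.ind p δ)) := by
    rw [map_smul]; rfl
  rw [this]
  have h2 : evalL γ (S.i p (S.ind p δ)) = S.i p (S.ind p δ) γ := rfl
  rw [h2, mul_comm]
  rfl

lemma cstar_mem (γ : Γ) (hγ : S.rk γ ≠ 0) :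
    cstar S γ ∈ Submodule.span ℝ (evalS S '' (S.Γs (S.rk γ - 1) : Set Γ)) := by
  rw [cstar, if_neg hγ, cAt_eq]
  exact Submodule.sum_mem _ fun δ _ =>
    Submodule.smul_mem _ _ (Submodule.subset_span ⟨δ, δ.2, rfl⟩)

lemma cstar_zero (γ : Γ) (hγ : S.rk γ = 0) : cstar S γ = 0 := by
  rw [cstar, if_pos hγ]

lemma evalS_eq_dstar_add_cstar (γ : Γ) : evalS S γ = dstar S γ + cstar S γ := by
  rw [dstar]; abel

/-- `e_γ^* ∈ span {d_δ^* : δ ∈ Γ_q}` for `γ ∈ Γ_q`. -/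
lemma evalS_mem_span_dstar (q : ℕ) :
    ∀ γ : Γ, γ ∈ S.Γs q →
      evalS S γ ∈ Submodule.span ℝ (dstar S '' (S.Γs q : Set Γ)) := by
  suffices H : ∀ p : ℕ, ∀ γ : Γ, S.rk γ ≤ p → γ ∈ S.Γs q →
      evalS S γ ∈ Submodule.span ℝ (dstar S '' (S.Γs q : Set Γ)) by
    intro γ hγ; exact H q γ (S.rk_le hγ) hγ
  intro p
  induction p with
  | zero =>
    intro γ hrk hγ
    rw [evalS_eq_dstar_add_cstar, cstar_zero S γ (Nat.le_zero.1 hrk), add_zero]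
    exact Submodule.subset_span ⟨γ, hγ, rfl⟩
  | succ p IH =>
    intro γ hrk hγ
    by_cases hp : S.rk γ ≤ p
    · exact IH γ hp hγ
    · have hrk' : S.rk γ = p + 1 := le_antisymm hrk (by omega)
      have hne : S.rk γ ≠ 0 := by omega
      rw [evalS_eq_dstar_add_cstar]
      refine Submodule.add_mem _ (Submodule.subset_span ⟨γ, hγ, rfl⟩) ?_
      have hc := cstar_mem S γ hne
      rw [hrk'] at hc
      simp only [Nat.add_sub_cancel] at hc
      have hpq : p ≤ q := by
        have := S.rk_le hγ; omega
      refine Submodule.span_le.2 ?_ hc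
      rintro _ ⟨δ, hδ, rfl⟩
      exact IH δ (S.rk_le hδ) (S.Γs_mono hpq hδ)

lemma dstar_mem_span_evalS {q : ℕ} {γ : Γ} (hγ : γ ∈ S.Γs q) :
    dstar S γ ∈ Submodule.span ℝ (evalS S '' (S.Γs q : Set Γ)) := by
  rw [dstar]
  refine Submodule.sub_mem _ (Submodule.subset_span ⟨γ, hγ, rfl⟩) ?_
  by_cases h0 : S.rk γ = 0
  · rw [cstar_zero S γ h0]; exact Submodule.zero_mem _
  · refine Submodule.span_le.2 ?_ (cstar_mem S γ h0)
    rintro _ ⟨δ, hδ, rfl⟩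
    have : S.rk γ - 1 ≤ q := by have := S.rk_le hγ; omega
    exact Submodule.subset_span ⟨δ, S.Γs_mono this hδ, rfl⟩

/-- Part 1. -/
lemma span_dstar_eq_span_evalS (q : ℕ) :
    Submodule.span ℝ (dstar S '' (S.Γs q : Set Γ)) =
      Submodule.span ℝ (evalS S '' (S.Γs q : Set Γ)) := by
  refine le_antisymm (Submodule.span_le.2 ?_) (Submodule.span_le.2 ?_)
  · rintro _ ⟨γ, hγ, rfl⟩
    exact dstar_mem_span_evalS S hγ
  · rintro _ ⟨γ, hγ, rfl⟩
    exact evalS_mem_span_dstar S q γ hγ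

end BD
namespace BD

variable {Γ : Type*} (S : System Γ)

lemma System.norm_i_le (q : ℕ) : ‖S.i q‖ ≤ S.C :=
  le_ciSup S.bdd q

lemma System.norm_ind_le (q : ℕ) (δ : Γ) : ‖S.ind q δ‖ ≤ 1 := by
  refine (pi_norm_le_iff_of_nonneg zero_le_one).2 fun γ => ?_
  by_cases h : (γ : Γ) = δ <;> simp [System.ind, h]

lemma System.one_le_C : 1 ≤ S.C := by
  obtain ⟨δ, hδ⟩ := S.nonempty 0
  have h1 : S.i 0 (S.ind 0 δ) δ = 1 := by
    have := S.extension 0 (S.ind 0 δ) ⟨δ, hδ⟩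
    rw [this, S.ind_apply_self hδ]
  have h2 : (1 : ℝ) ≤ ‖S.i 0 (S.ind 0 δ)‖ := by
    have := lp.norm_apply_le_norm ENNReal.top_ne_zero (S.i 0 (S.ind 0 δ)) δ
    rw [h1] at this
    simpa using this
  have h3 : ‖S.i 0 (S.ind 0 δ)‖ ≤ ‖S.i 0‖ := by
    calc ‖S.i 0 (S.ind 0 δ)‖ ≤ ‖S.i 0‖ * ‖S.ind 0 δ‖ := (S.i 0).le_opNorm _
    _ ≤ ‖S.i 0‖ * 1 := by
        exact mul_le_mul_of_nonneg_left (S.norm_ind_le 0 δ) (norm_nonneg _)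
    _ = ‖S.i 0‖ := mul_one _
  exact le_trans (le_trans h2 h3) (S.norm_i_le 0)

lemma System.C_nonneg : 0 ≤ S.C := le_trans zero_le_one S.one_le_C

lemma System.C_pos : 0 < S.C := lt_of_lt_of_le zero_lt_one S.one_le_C

lemma norm_evalS_le (γ : Γ) : ‖evalS S γ‖ ≤ 1 := by
  refine ContinuousLinearMap.opNorm_le_bound _ zero_le_one fun x => ?_
  rw [one_mul]
  have : evalS S γ x = (x : Linf Γ) γ := rfl
  rw [this]
  exact lp.norm_apply_le_norm ENNReal.top_ne_zero (x : Linf Γ) γ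

lemma System.countable (S : System Γ) : Countable Γ := by
  have h1 : (Set.univ : Set Γ).Countable := by
    have h2 : (Set.univ : Set Γ) ⊆ ⋃ q, (S.Γs q : Set Γ) := by
      intro γ _
      obtain ⟨q, hq⟩ := S.covers γ
      exact Set.mem_iUnion.2 ⟨q, hq⟩
    exact Set.Countable.mono h2 (Set.countable_iUnion fun q => (S.Γs q).countable_toSet)
  exact Set.countable_univ_iff.1 h1

lemma System.infinite (S : System Γ) : Infinite Γ := by
  have hcard : StrictMono fun q => (S.Γs q).card :=
    fun a b h => Finset.card_lt_card (S.strict h)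
  by_contra hinf
  rw [not_infinite_iff_finite] at hinf
  haveI := Fintype.ofFinite Γ
  have h1 : ∀ n : ℕ, n ≤ (S.Γs n).card := fun n => hcard.le_apply
  have h2 : ∀ n : ℕ, (S.Γs n).card ≤ Fintype.card Γ := fun n => Finset.card_le_univ _
  have := le_trans (h1 (Fintype.card Γ + 1)) (h2 _)
  omega

end BD
namespace BD

variable {Γ : Type*} (S : System Γ)

lemma l1_hasSum_norm (a : lp (fun _ : ℕ => ℝ) 1) : HasSum (fun n => ‖a n‖) ‖a‖ := by
  have h := lp.hasSum_norm (p := 1) (E := fun _ : ℕ => ℝ) (by norm_num) a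
  simpa using h

lemma l1_summable_abs (a : lp (fun _ : ℕ => ℝ) 1) : Summable fun n => ‖a n‖ :=
  (l1_hasSum_norm a).summable

lemma l1_norm_eq_tsum (a : lp (fun _ : ℕ => ℝ) 1) : ‖a‖ = ∑' n, ‖a n‖ :=
  (l1_hasSum_norm a).tsum_eq.symm

variable (e : ℕ ≃ Γ)

lemma summable_term (a : lp (fun _ : ℕ => ℝ) 1) :
    Summable fun n => a n • evalS S (e n) := by
  refine Summable.of_norm_bounded (l1_summable_abs a) fun n => ?_
  rw [norm_smul]
  calc ‖a n‖ * ‖evalS S (e n)‖ ≤ ‖a n‖ * 1 :=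
        mul_le_mul_of_nonneg_left (norm_evalS_le S (e n)) (norm_nonneg _)
  _ = ‖a n‖ := mul_one _

/-- The linear map `ℓ1 → 𝔛*`, `a ↦ ∑ a_n e_{e n}^*`. -/
def Tlin : lp (fun _ : ℕ => ℝ) 1 →ₗ[ℝ] (↥S.space →L[ℝ] ℝ) where
  toFun a := ∑' n, a n • evalS S (e n)
  map_add' a b := by
    rw [← Summable.tsum_add (summable_term S e a) (summable_term S e b)]
    refine tsum_congr fun n => ?_
    have : (↑(a + b) : ℕ → ℝ) n = a n + b n := by
      rw [lp.coeFn_add]; rfl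
    rw [this, add_smul]
  map_smul' c a := by
    rw [RingHom.id_apply, ← Summable.tsum_const_smul c (summable_term S e a)]
    refine tsum_congr fun n => ?_
    have : (↑(c • a) : ℕ → ℝ) n = c * a n := by
      rw [lp.coeFn_smul]; rfl
    rw [this, smul_smul]

lemma Tlin_norm_le (a : lp (fun _ : ℕ => ℝ) 1) : ‖Tlin S e a‖ ≤ ‖a‖ := by
  have h1 : Summable fun n => ‖a n • evalS S (e n)‖ := by
    refine Summable.of_nonneg_of_le (fun n => norm_nonneg _) (fun n => ?_) (l1_summable_abs a)
    rw [norm_smul]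
    calc ‖a n‖ * ‖evalS S (e n)‖ ≤ ‖a n‖ * 1 :=
          mul_le_mul_of_nonneg_left (norm_evalS_le S (e n)) (norm_nonneg _)
    _ = ‖a n‖ := mul_one _
  calc ‖Tlin S e a‖ ≤ ∑' n, ‖a n • evalS S (e n)‖ := norm_tsum_le_tsum_norm h1
  _ ≤ ∑' n, ‖a n‖ := by
      refine Summable.tsum_le_tsum (fun n => ?_) h1 (l1_summable_abs a)
      rw [norm_smul]
      calc ‖a n‖ * ‖evalS S (e n)‖ ≤ ‖a n‖ * 1 :=
            mul_le_mul_of_nonneg_left (norm_evalS_le S (e n)) (norm_nonneg _)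
      _ = ‖a n‖ := mul_one _
  _ = ‖a‖ := (l1_norm_eq_tsum a).symm

/-- The operator `ℓ1 → 𝔛*`. -/
def Top : lp (fun _ : ℕ => ℝ) 1 →L[ℝ] (↥S.space →L[ℝ] ℝ) :=
  LinearMap.mkContinuous (Tlin S e) 1 fun a => by
    rw [one_mul]; exact Tlin_norm_le S e a

lemma Top_apply (a : lp (fun _ : ℕ => ℝ) 1) :
    Top S e a = ∑' n, a n • evalS S (e n) := rfl

lemma Top_single (n : ℕ) : Top S e (lp.single 1 n (1 : ℝ)) = evalS S (e n) := by
  rw [Top_apply]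
  rw [tsum_eq_single n]
  · rw [lp.single_apply_self, one_smul]
  · intro m hm
    rw [lp.single_apply_ne 1 n _ hm, zero_smul]

end BD
namespace BD

variable {Γ : Type*} (S : System Γ) (e : ℕ ≃ Γ)

lemma Top_lower (a : lp (fun _ : ℕ => ℝ) 1) : ‖a‖ ≤ S.C * ‖Top S e a‖ := by
  classical
  have hC1 := S.one_le_C
  have hsum := l1_summable_abs a
  refine le_of_forall_pos_le_add fun ε hε => ?_
  set ε' : ℝ := ε / (S.C + 1) with hε'def
  have hε' : 0 < ε' := div_pos hε (by linarith)
  -- find a finset with small tail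
  have htail := (tendsto_order.1 (tendsto_tsum_compl_atTop_zero fun n => ‖a n‖)).2 ε' hε'
  obtain ⟨s₀, hs₀⟩ := htail.exists
  have hs₀2 : ∑' x : ↑((s₀ : Set ℕ)ᶜ), ‖a (x : ℕ)‖ < ε' := hs₀
  -- enlarge to the preimage of a Γs q
  set q : ℕ := s₀.sup fun n => S.rk (e n) with hq
  set s' : Finset ℕ := (S.Γs q).image e.symm with hs'
  have hmem_s' : ∀ n : ℕ, n ∈ s' ↔ e n ∈ S.Γs q := by
    intro n
    constructor
    · intro hn
      obtain ⟨γ, hγ, hγ2⟩ := Finset.mem_image.1 hn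
      rwa [← hγ2, Equiv.apply_symm_apply]
    · intro hn
      exact Finset.mem_image.2 ⟨e n, hn, by simp⟩
  have hs₀s' : s₀ ⊆ s' := by
    intro n hn
    refine (hmem_s' n).2 ?_
    exact S.Γs_mono (Finset.le_sup hn) (S.mem_Γs_rk (e n))
  -- tail over s' is small
  have hcompl : ∑' x : ↑((s' : Set ℕ)ᶜ), ‖a (x : ℕ)‖ < ε' := by
    have h1 := Summable.sum_add_tsum_compl (s := s₀) hsum
    have h2 := Summable.sum_add_tsum_compl (s := s') hsum
    have h3 : ∑ n ∈ s₀, ‖a n‖ ≤ ∑ n ∈ s', ‖a n‖ :=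
      Finset.sum_le_sum_of_subset_of_nonneg hs₀s' fun _ _ _ => norm_nonneg _
    linarith
  -- the witness vector
  set x : ↥(S.Γs q) → ℝ := fun δ => if 0 ≤ a (e.symm δ.1) then 1 else -1 with hx
  have hxnorm : ‖x‖ ≤ 1 := by
    refine (pi_norm_le_iff_of_nonneg zero_le_one).2 fun δ => ?_
    by_cases h : 0 ≤ a (e.symm δ.1) <;> simp [hx, h]
  set w : Linf Γ := S.i q x with hw
  have hwnorm : ‖w‖ ≤ S.C := by
    calc ‖w‖ ≤ ‖S.i q‖ * ‖x‖ := (S.i q).le_opNorm x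
    _ ≤ S.C * 1 := mul_le_mul (S.norm_i_le q) hxnorm (norm_nonneg _) S.C_nonneg
    _ = S.C := mul_one _
  set wb : ↥S.space := ⟨w, S.i_mem_space q x⟩ with hwb
  have hwbnorm : ‖wb‖ ≤ S.C := hwnorm
  -- bounded coordinates
  have hwcoord : ∀ γ : Γ, ‖w γ‖ ≤ S.C :=
    fun γ => le_trans (lp.norm_apply_le_norm ENNReal.top_ne_zero w γ) hwnorm
  have hbd : ∀ n : ℕ, ‖a n * w (e n)‖ ≤ ‖a n‖ * S.C := fun n => by
    rw [norm_mul]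
    exact mul_le_mul_of_nonneg_left (hwcoord (e n)) (norm_nonneg _)
  -- summability of the evaluated series
  have hsaw : Summable fun n => a n * w (e n) := by
    refine Summable.of_norm_bounded (hsum.mul_right S.C) fun n => hbd n
  -- evaluating the functional at wb
  have hTw : Top S e a wb = ∑' n, a n * w (e n) := by
    rw [Top_apply]
    have hφ := (ContinuousLinearMap.apply ℝ ℝ wb).map_tsum (summable_term S e a)
    have hφ' : (ContinuousLinearMap.apply ℝ ℝ wb) (∑' n, a n • evalS S (e n)) =
        (∑' n, a n • evalS S (e n)) wb := rfl
    rw [← hφ', hφ]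
    refine tsum_congr fun n => ?_
    rfl
  -- the diagonal terms
  have hdiag : ∀ n ∈ s', a n * w (e n) = ‖a n‖ := by
    intro n hn
    have hγ : e n ∈ S.Γs q := (hmem_s' n).1 hn
    have hext : w (e n) = x ⟨e n, hγ⟩ := S.extension q x ⟨e n, hγ⟩
    rw [hext, hx]
    simp only [Equiv.symm_apply_apply]
    by_cases h : 0 ≤ a n
    · rw [if_pos h, mul_one, Real.norm_eq_abs, abs_of_nonneg h]
    · rw [if_neg h, Real.norm_eq_abs, abs_of_neg (not_le.1 h)]; ring
  -- split the sum
  have hsplit := Summable.sum_add_tsum_compl (s := s') hsaw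
  -- estimate the tail
  have htail2 : |∑' x : ↑((s' : Set ℕ)ᶜ), a (x : ℕ) * w (e (x : ℕ))| ≤ S.C * ε' := by
    have h2 : Summable fun x : ↑((s' : Set ℕ)ᶜ) => ‖a (x : ℕ)‖ * S.C :=
      (hsum.mul_right S.C).subtype _
    have h1 : Summable fun x : ↑((s' : Set ℕ)ᶜ) => ‖a (x : ℕ) * w (e (x : ℕ))‖ :=
      Summable.of_nonneg_of_le (fun n => norm_nonneg _) (fun n => hbd n) h2
    calc |∑' x : ↑((s' : Set ℕ)ᶜ), a (x : ℕ) * w (e (x : ℕ))|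
        ≤ ∑' x : ↑((s' : Set ℕ)ᶜ), ‖a (x : ℕ) * w (e (x : ℕ))‖ := by
          rw [← Real.norm_eq_abs]
          exact norm_tsum_le_tsum_norm h1
    _ ≤ ∑' x : ↑((s' : Set ℕ)ᶜ), ‖a (x : ℕ)‖ * S.C :=
          Summable.tsum_le_tsum (fun n => hbd n) h1 h2
    _ = (∑' x : ↑((s' : Set ℕ)ᶜ), ‖a (x : ℕ)‖) * S.C := tsum_mul_right
    _ ≤ ε' * S.C := mul_le_mul_of_nonneg_right hcompl.le S.C_nonneg
    _ = S.C * ε' := mul_comm _ _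
  -- assemble the estimate
  have hA : ∑ n ∈ s', a n * w (e n) = ∑ n ∈ s', ‖a n‖ := Finset.sum_congr rfl hdiag
  have hB : Top S e a wb ≤ S.C * ‖Top S e a‖ := by
    calc Top S e a wb ≤ |Top S e a wb| := le_abs_self _
    _ = ‖Top S e a wb‖ := (Real.norm_eq_abs _).symm
    _ ≤ ‖Top S e a‖ * ‖wb‖ := (Top S e a).le_opNorm wb
    _ ≤ ‖Top S e a‖ * S.C := mul_le_mul_of_nonneg_left hwbnorm (norm_nonneg _)
    _ = S.C * ‖Top S e a‖ := mul_comm _ _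
  have hE : ‖a‖ = (∑ n ∈ s', ‖a n‖) + ∑' x : ↑((s' : Set ℕ)ᶜ), ‖a (x : ℕ)‖ := by
    rw [l1_norm_eq_tsum, ← Summable.sum_add_tsum_compl (s := s') hsum]
  have hCne : S.C + 1 ≠ 0 := by linarith
  have hmul : (S.C + 1) * ε' = ε := by
    rw [hε'def]; field_simp
  obtain ⟨h5, h6⟩ := abs_le.1 htail2
  linarith [hsplit, hA, hB, hE, hcompl, hTw]

end BD
namespace BD

variable {Γ : Type*} (S : System Γ) (e : ℕ ≃ Γ)

lemma evalS_mem_span_range_dstar (γ : Γ) :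
    evalS S γ ∈ Submodule.span ℝ (Set.range (dstar S)) := by
  refine Submodule.span_mono ?_ (evalS_mem_span_dstar S (S.rk γ) γ (S.mem_Γs_rk γ))
  rintro _ ⟨δ, _, rfl⟩
  exact ⟨δ, rfl⟩

lemma Top_mem_dstarSpan (a : lp (fun _ : ℕ => ℝ) 1) : Top S e a ∈ dstarSpan S := by
  have hhs : HasSum (fun n => a n • evalS S (e n)) (Top S e a) :=
    (summable_term S e a).hasSum
  show Top S e a ∈ (Submodule.span ℝ (Set.range (dstar S))).topologicalClosure
  have hclos : Top S e a ∈
      closure ((Submodule.span ℝ (Set.range (dstar S)) : Submodule ℝ _) : Set _) := by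
    refine mem_closure_of_tendsto hhs (Filter.Eventually.of_forall fun s => ?_)
    exact Submodule.sum_mem _ fun n _ =>
      Submodule.smul_mem _ _ (evalS_mem_span_range_dstar S (e n))
  exact hclos

lemma evalS_eq_Top_single (γ : Γ) :
    evalS S γ = Top S e (lp.single 1 (e.symm γ) (1 : ℝ)) := by
  rw [Top_single, Equiv.apply_symm_apply]

lemma Top_antilipschitz :
    AntilipschitzWith (S.C.toNNReal) (Top S e) := by
  refine ContinuousLinearMap.antilipschitz_of_bound _ fun a => ?_
  rw [Real.coe_toNNReal _ S.C_nonneg]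
  exact Top_lower S e a

lemma Top_range_eq :
    LinearMap.range (Top S e).toLinearMap = dstarSpan S := by
  haveI : Fact ((1 : ℝ≥0∞) ≤ 1) := ⟨le_refl _⟩
  refine le_antisymm ?_ ?_
  · rintro _ ⟨a, rfl⟩
    exact Top_mem_dstarSpan S e a
  · refine Submodule.topologicalClosure_minimal _ ?_ ?_
    · refine Submodule.span_le.2 ?_
      rintro _ ⟨γ, rfl⟩
      refine Submodule.span_le.2 ?_ (dstar_mem_span_evalS S (S.mem_Γs_rk γ))
      rintro _ ⟨δ, _, rfl⟩
      exact ⟨lp.single 1 (e.symm δ) (1 : ℝ), (evalS_eq_Top_single S e δ).symm⟩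
    · have : (LinearMap.range (Top S e).toLinearMap : Set (↥S.space →L[ℝ] ℝ)) =
          Set.range (Top S e) := by
        ext y; simp [LinearMap.mem_range]
      rw [this]
      exact (Top_antilipschitz S e).isClosed_range (Top S e).uniformContinuous

end BD
namespace BD

variable {Γ : Type*} (S : System Γ) (e : ℕ ≃ Γ)

lemma Top_inj : Function.Injective (Top S e) := (Top_antilipschitz S e).injective

/-- The linear equivalence `ℓ1 ≃ span(d*)`. -/
def TopEquivLin : lp (fun _ : ℕ => ℝ) 1 ≃ₗ[ℝ] ↥(dstarSpan S) :=
  (LinearEquiv.ofInjective ((Top S e).toLinearMap) (Top_inj S e)).trans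
    (LinearEquiv.ofEq _ _ (by rw [← Top_range_eq S e]))

lemma TopEquivLin_coe (a : lp (fun _ : ℕ => ℝ) 1) :
    ((TopEquivLin S e a : ↥(dstarSpan S)) : (↥S.space →L[ℝ] ℝ)) = Top S e a := rfl

lemma Top_symm_apply (y : ↥(dstarSpan S)) :
    Top S e ((TopEquivLin S e).symm y) = (y : (↥S.space →L[ℝ] ℝ)) := by
  have h := (TopEquivLin S e).apply_symm_apply y
  have h2 : ((TopEquivLin S e ((TopEquivLin S e).symm y) : ↥(dstarSpan S)) :
      (↥S.space →L[ℝ] ℝ)) = (y : (↥S.space →L[ℝ] ℝ)) := by rw [h]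
  rw [← h2]
  exact (TopEquivLin_coe S e _).symm

/-- The forward operator `ℓ1 → span(d*)`. -/
def Tcod : lp (fun _ : ℕ => ℝ) 1 →L[ℝ] ↥(dstarSpan S) :=
  (Top S e).codRestrict (dstarSpan S) (Top_mem_dstarSpan S e)

/-- The inverse operator `span(d*) → ℓ1`. -/
def Tinv : ↥(dstarSpan S) →L[ℝ] lp (fun _ : ℕ => ℝ) 1 :=
  LinearMap.mkContinuous
    ((TopEquivLin S e).symm : ↥(dstarSpan S) →ₗ[ℝ] lp (fun _ : ℕ => ℝ) 1) S.C
    (fun y => by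
      calc ‖(TopEquivLin S e).symm y‖
          ≤ S.C * ‖Top S e ((TopEquivLin S e).symm y)‖ := Top_lower S e _
      _ = S.C * ‖y‖ := by rw [Top_symm_apply S e y]; rfl)

lemma Tinv_norm_le : ‖Tinv S e‖ ≤ S.C :=
  LinearMap.mkContinuous_norm_le _ S.C_nonneg _

lemma Top_norm_le : ‖Top S e‖ ≤ 1 :=
  LinearMap.mkContinuous_norm_le _ zero_le_one _

lemma Tcod_norm_le : ‖Tcod S e‖ ≤ 1 := by
  refine ContinuousLinearMap.opNorm_le_bound _ zero_le_one fun a => ?_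
  have h : ‖Tcod S e a‖ = ‖Top S e a‖ := rfl
  rw [h, one_mul]
  calc ‖Top S e a‖ ≤ ‖Top S e‖ * ‖a‖ := (Top S e).le_opNorm a
  _ ≤ 1 * ‖a‖ := mul_le_mul_of_nonneg_right (Top_norm_le S e) (norm_nonneg _)
  _ = ‖a‖ := one_mul _

/-- The continuous linear equivalence `ℓ1 ≃L span(d*)`. -/
def TopEquiv : lp (fun _ : ℕ => ℝ) 1 ≃L[ℝ] ↥(dstarSpan S) :=
  ContinuousLinearEquiv.equivOfInverse (Tcod S e) (Tinv S e)
    (fun a => by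
      have h1 : Tinv S e (Tcod S e a) = (TopEquivLin S e).symm (Tcod S e a) := rfl
      have h2 : Tcod S e a = TopEquivLin S e a := Subtype.ext rfl
      rw [h1, h2, LinearEquiv.symm_apply_apply])
    (fun y => by
      have h1 : Tinv S e y = (TopEquivLin S e).symm y := rfl
      refine Subtype.ext ?_
      rw [h1]
      have h2 : ((Tcod S e ((TopEquivLin S e).symm y)) : (↥S.space →L[ℝ] ℝ)) =
          Top S e ((TopEquivLin S e).symm y) := rfl
      rw [h2, Top_symm_apply S e y])

end BD
/-- In a Bourgain–Delbaen space with `C = sup_q ‖i_q‖`, for every `q` the span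
of `{d_γ^* : γ ∈ Γ_q}` equals the span of `{e_γ^* : γ ∈ Γ_q}`; in particular the closed linear
span of `(d_γ^*)_{γ∈Γ}` in the dual is `C`-isomorphic to `ℓ1`. -/
theorem statement6 {Γ : Type*} (S : BD.System Γ) :
    (∀ q : ℕ, Submodule.span ℝ (BD.dstar S '' (S.Γs q : Set Γ)) =
      Submodule.span ℝ (BD.evalS S '' (S.Γs q : Set Γ))) ∧
    (∃ T : ↥(BD.dstarSpan S) ≃L[ℝ] lp (fun _ : ℕ => ℝ) 1,
      ‖(T : ↥(BD.dstarSpan S) →L[ℝ] lp (fun _ : ℕ => ℝ) 1)‖ *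
        ‖(T.symm : lp (fun _ : ℕ => ℝ) 1 →L[ℝ] ↥(BD.dstarSpan S))‖ ≤ S.C) := by
  constructor
  · exact fun q => BD.span_dstar_eq_span_evalS S q
  · haveI : Countable Γ := S.countable
    haveI : Infinite Γ := S.infinite
    obtain ⟨d⟩ := nonempty_denumerable Γ
    let e : ℕ ≃ Γ := (@Denumerable.eqv Γ d).symm
    refine ⟨(BD.TopEquiv S e).symm, ?_⟩
    have h1 : ‖((BD.TopEquiv S e).symm :
        ↥(BD.dstarSpan S) →L[ℝ] lp (fun _ : ℕ => ℝ) 1)‖ ≤ S.C := by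
      refine ContinuousLinearMap.opNorm_le_bound _ S.C_nonneg fun y => ?_
      have hy : ((BD.TopEquiv S e).symm :
          ↥(BD.dstarSpan S) →L[ℝ] lp (fun _ : ℕ => ℝ) 1) y = BD.Tinv S e y := rfl
      rw [hy]
      calc ‖BD.Tinv S e y‖ ≤ ‖BD.Tinv S e‖ * ‖y‖ := (BD.Tinv S e).le_opNorm y
      _ ≤ S.C * ‖y‖ := mul_le_mul_of_nonneg_right (BD.Tinv_norm_le S e) (norm_nonneg _)
    have h2 : ‖(((BD.TopEquiv S e).symm.symm) :
        lp (fun _ : ℕ => ℝ) 1 →L[ℝ] ↥(BD.dstarSpan S))‖ ≤ 1 := by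
      refine ContinuousLinearMap.opNorm_le_bound _ zero_le_one fun a => ?_
      have ha : (((BD.TopEquiv S e).symm.symm) :
          lp (fun _ : ℕ => ℝ) 1 →L[ℝ] ↥(BD.dstarSpan S)) a = BD.Tcod S e a := rfl
      rw [ha]
      calc ‖BD.Tcod S e a‖ ≤ ‖BD.Tcod S e‖ * ‖a‖ := (BD.Tcod S e).le_opNorm a
      _ ≤ 1 * ‖a‖ := mul_le_mul_of_nonneg_right (BD.Tcod_norm_le S e) (norm_nonneg _)
    calc ‖((BD.TopEquiv S e).symm : ↥(BD.dstarSpan S) →L[ℝ] lp (fun _ : ℕ => ℝ) 1)‖ *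
        ‖((BD.TopEquiv S e).symm.symm : lp (fun _ : ℕ => ℝ) 1 →L[ℝ] ↥(BD.dstarSpan S))‖
        ≤ S.C * 1 := mul_le_mul h1 h2 (norm_nonneg _) S.C_nonneg
    _ = S.C := mul_one _
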